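/- Let G be a T1 paratopological group that is not feebly compact, precompact, with a countable dense subgroup P. Then there exists a subset L of P such that L is discrete and closed in G and the subgroup generated by L equals P. In particular, L is a closed suitable set for G. -/

import Mathlib

open Pointwise

def IsPrecompactGroup (G : Type*) [Group G] [TopologicalSpace G] : Prop :=
  ∀ U ∈ nhds (1 : G), ∃ F : Finset G, (F : Set G) * U = Set.univ

/-- Every locally finite family of non-empty open sets is finite. -/
def FeeblyCompact (X : Type*) [TopologicalSpace X] : Prop :=
  ∀ 𝒰 : Set (Set X), (∀ U ∈ 𝒰, IsOpen U ∧ U.Nonempty) →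
    (∀ x : X, ∃ V ∈ nhds x, {U ∈ 𝒰 | (U ∩ V).Nonempty}.Finite) → 𝒰.Finite

theorem aux_closed_discrete {X : Type*} [TopologicalSpace X] [T1Space X]
    {L : Set X} (h : ∀ z : X, ∃ V ∈ nhds z, (L ∩ V).Finite) :
    IsClosed L ∧ DiscreteTopology L := by
  have key : ∀ z : X, ∃ O : Set X, IsOpen O ∧ z ∈ O ∧ (L ∩ O).Finite := by
    intro z
    obtain ⟨V, hV, hfin⟩ := h z
    obtain ⟨O, hOV, hO, hzO⟩ := mem_nhds_iff.mp hV
    exact ⟨O, hO, hzO, hfin.subset (by exact Set.inter_subset_inter_right _ hOV)⟩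
  constructor
  · rw [← isOpen_compl_iff, isOpen_iff_mem_nhds]
    intro z hz
    obtain ⟨O, hO, hzO, hfin⟩ := key z
    have hcl : IsClosed (L ∩ O) := hfin.isClosed
    refine mem_nhds_iff.mpr ⟨O \ (L ∩ O), ?_, hO.sdiff hcl, ⟨hzO, fun hx => hz hx.1⟩⟩
    intro x hx
    intro hxL
    exact hx.2 ⟨hxL, hx.1⟩
  · rw [discreteTopology_iff_isOpen_singleton]
    rintro ⟨x, hxL⟩
    obtain ⟨O, hO, hzO, hfin⟩ := key x
    have hcl : IsClosed ((L ∩ O) \ {x}) := (hfin.subset Set.diff_subset).isClosed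
    have hWopen : IsOpen (O \ ((L ∩ O) \ {x})) := hO.sdiff hcl
    refine isOpen_induced_iff.mpr ⟨O \ ((L ∩ O) \ {x}), hWopen, ?_⟩
    ext ⟨y, hyL⟩
    simp only [Set.mem_preimage, Set.mem_singleton_iff, Subtype.ext_iff]
    constructor
    · rintro ⟨hyO, hy2⟩
      by_contra hne
      exact hy2 ⟨⟨hyL, hyO⟩, hne⟩
    · rintro rfl
      exact ⟨hzO, fun hx => hx.2 rfl⟩

theorem stmt9 {G : Type*} [Group G] [TopologicalSpace G] [ContinuousMul G] [T1Space G]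
    (hnf : ¬ FeeblyCompact G) (hpre : IsPrecompactGroup G)
    (P : Subgroup G) (hPc : (P : Set G).Countable) (hPd : Dense (P : Set G)) :
    ∃ L : Set G, L ⊆ (P : Set G) ∧ DiscreteTopology L ∧ IsClosed L ∧
      Subgroup.closure L = P ∧ Dense (Subgroup.closure L : Set G) := by
  classical
  -- enumeration of P
  obtain ⟨p, hp⟩ := hPc.exists_eq_range ⟨1, P.one_mem⟩
  have hpP : ∀ i, p i ∈ (P : Set G) := fun i => hp ▸ Set.mem_range_self i
  -- the locally finite family
  rw [FeeblyCompact] at hnf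
  push_neg at hnf
  obtain ⟨𝒰, h𝒰o, h𝒰lf, h𝒰inf⟩ := hnf
  have hinf : 𝒰.Infinite := h𝒰inf
  set e : ℕ ↪ ↥𝒰 := hinf.natEmbedding with he
  set U : ℕ → Set G := fun n => (e n : Set G) with hU
  have hUmem : ∀ n, U n ∈ 𝒰 := fun n => (e n).2
  have hUopen : ∀ n, IsOpen (U n) := fun n => (h𝒰o _ (hUmem n)).1
  have hUne : ∀ n, (U n).Nonempty := fun n => (h𝒰o _ (hUmem n)).2
  have hUinj : Function.Injective U := by
    intro n m hnm
    exact e.injective (Subtype.ext hnm)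
  have hUlf : ∀ z : G, ∃ V ∈ nhds z, {n | (U n ∩ V).Nonempty}.Finite := by
    intro z
    obtain ⟨V, hV, hfin⟩ := h𝒰lf z
    refine ⟨V, hV, ?_⟩
    have : {n | (U n ∩ V).Nonempty} = U ⁻¹' {W ∈ 𝒰 | (W ∩ V).Nonempty} := by
      ext n
      simp only [Set.mem_setOf_eq, Set.mem_preimage]
      exact ⟨fun h => ⟨hUmem n, h⟩, fun h => h.2⟩
    rw [this]
    exact hfin.preimage hUinj.injOn
  choose a ha using hUne
  -- letters available at member n
  set D : ℕ → Set G := fun n => {g : G | g ∈ (P : Set G) ∧ ∃ x ∈ U n, x * g ∈ U n} with hD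
  set S : ℕ → Set G := fun k => ⋃ n, ⋃ (_ : k ≤ n), D n with hS
  set T : ℕ → Subgroup G := fun k => Subgroup.closure (S k) with hT
  have hSP : ∀ k, S k ⊆ (P : Set G) := by
    intro k g hg
    simp only [hS, Set.mem_iUnion] at hg
    obtain ⟨n, _, hgD⟩ := hg
    exact hgD.1
  have hTle : ∀ k, T k ≤ P := fun k => (Subgroup.closure_le P).mpr (hSP k)
  have hTP : ∀ k, (T k : Set G) ⊆ (P : Set G) := fun k x hx => hTle k hx
  have hDS : ∀ k n, k ≤ n → D n ⊆ S k := by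
    intro k n hkn g hg
    simp only [hS, Set.mem_iUnion]
    exact ⟨n, hkn, hg⟩
  have hDT : ∀ k n, k ≤ n → D n ⊆ (T k : Set G) := fun k n hkn =>
    (hDS k n hkn).trans Subgroup.subset_closure
  -- the neighbourhoods of 1
  set Ω : ℕ → Set G := fun k => ⋃ n, ⋃ (_ : k ≤ n), (a n)⁻¹ • U n with hΩ
  have hΩopen : ∀ k, IsOpen (Ω k) :=
    fun k => isOpen_iUnion fun n => isOpen_iUnion fun _ => (hUopen n).smul _
  have hΩ1 : ∀ k, (1 : G) ∈ Ω k := by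
    intro k
    simp only [hΩ, Set.mem_iUnion]
    exact ⟨k, le_refl k, Set.mem_smul_set.mpr ⟨a k, ha k, by rw [smul_eq_mul, inv_mul_cancel]⟩⟩
  have hΩnhds : ∀ k, Ω k ∈ nhds (1 : G) := fun k => (hΩopen k).mem_nhds (hΩ1 k)
  have hPΩ : ∀ k, (P : Set G) ∩ Ω k ⊆ (T k : Set G) := by
    rintro k x ⟨hxP, hxΩ⟩
    simp only [hΩ, Set.mem_iUnion] at hxΩ
    obtain ⟨n, hkn, hxU⟩ := hxΩ
    obtain ⟨u, hu, hux⟩ := Set.mem_smul_set.mp hxU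
    rw [smul_eq_mul] at hux
    refine hDT k n hkn ⟨hxP, a n, ha n, ?_⟩
    rw [← hux, mul_inv_cancel_left]
    exact hu
  -- absorption
  have habs : ∀ k, ∀ q ∈ (P : Set G),
      (Ω k ∩ (fun x => x * q) '' (Ω k)).Nonempty → q ∈ T k := by
    intro k q hq hne
    have hWopen : IsOpen (Ω k ∩ (fun x => x * q) '' (Ω k)) := by
      refine (hΩopen k).inter ?_
      have := (Homeomorph.mulRight q).isOpenMap (Ω k) (hΩopen k)
      simpa [Homeomorph.mulRight] using this
    obtain ⟨x, hxP, hxΩ, hximg⟩ := hPd.exists_mem_open hWopen hne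
    obtain ⟨ω, hω, hωq⟩ := hximg
    have hx1 : x ∈ (T k : Set G) := hPΩ k ⟨hxP, hxΩ⟩
    have hx2 : x * q⁻¹ ∈ (T k : Set G) := by
      refine hPΩ k ⟨P.mul_mem hxP (P.inv_mem hq), ?_⟩
      have : x * q⁻¹ = ω := by
        simp only at hωq
        rw [← hωq, mul_inv_cancel_right]
      rw [this]
      exact hω
    have : q = (x * q⁻¹)⁻¹ * x := by group
    rw [this]
    exact (T k).mul_mem ((T k).inv_mem hx2) hx1
  -- transversal lemma
  have trans : ∀ (k : ℕ) (M : Subgroup G), (M : Set G) ⊆ (P : Set G) →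
      ∃ Rt : Set G, Rt.Finite ∧ Rt ⊆ (M : Set G) ∧
        ∀ t ∈ (M : Set G), ∃ r ∈ Rt, r⁻¹ * t ∈ T k := by
    intro k M hM
    obtain ⟨F, hF⟩ := hpre (Ω k) (hΩnhds k)
    have pick : ∀ f : G, ∃ x : G, x ∈ (M : Set G) ∧
        (((M : Set G) ∩ f • Ω k).Nonempty → x ∈ (M : Set G) ∩ f • Ω k) := by
      intro f
      by_cases h : ((M : Set G) ∩ f • Ω k).Nonempty
      · exact ⟨h.some, h.some_mem.1, fun _ => h.some_mem⟩
      · exact ⟨1, M.one_mem, fun hh => absurd hh h⟩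
    choose rpt hrptM hrpt using pick
    refine ⟨rpt '' (F : Set G), (F.finite_toSet).image rpt, ?_, ?_⟩
    · rintro x ⟨f, _, rfl⟩
      exact hrptM f
    · intro t ht
      have htu : t ∈ (F : Set G) * Ω k := by rw [hF]; trivial
      obtain ⟨f, hfF, ω, hω, hfω⟩ := Set.mem_mul.mp htu
      have hne : ((M : Set G) ∩ f • Ω k).Nonempty :=
        ⟨t, ht, Set.mem_smul_set.mpr ⟨ω, hω, by rw [smul_eq_mul, hfω]⟩⟩
      obtain ⟨hrM, hrS⟩ := hrpt f hne
      obtain ⟨ω', hω', hfω'⟩ := Set.mem_smul_set.mp hrS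
      rw [smul_eq_mul] at hfω'
      refine ⟨rpt f, Set.mem_image_of_mem rpt hfF, ?_⟩
      refine habs k _ (P.mul_mem (P.inv_mem (hM hrM)) (hM ht)) ⟨ω, hω, ω', hω', ?_⟩
      simp only
      rw [← hfω', ← hfω]
      group
  -- global transversal of T 0 inside P
  obtain ⟨R, hRfin, hRP, hR⟩ := trans 0 P (by exact fun x hx => hx)
  -- transversals of T (j+1) inside T j
  have transFs : ∀ j : ℕ, ∃ Fs : Set G, Fs.Finite ∧ Fs ⊆ (T j : Set G) ∧
      ∀ t ∈ (T j : Set G), ∃ f ∈ Fs, f⁻¹ * t ∈ T (j + 1) :=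
    fun j => trans (j + 1) (T j) (hTP j)
  choose Fs hFsfin hFsT hFs using transFs
  -- coset representatives for the p i
  choose ρ hρR hρT using fun i => hR (p i) (hpP i)
  -- descent step
  choose φ hφFs hφT using fun (j : ℕ) (x : G) (hx : x ∈ (T j : Set G)) => hFs j x hx
  -- the chains
  have chain : ∀ i : ℕ, ∃ t : ℕ → G, t 0 = (ρ i)⁻¹ * p i ∧ (∀ j, t j ∈ (T j : Set G)) ∧
      ∀ j, ∃ f ∈ Fs j, t j = f * t (j + 1) := by
    intro i
    let t : ∀ j : ℕ, {x : G // x ∈ (T j : Set G)} := fun j =>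
      Nat.rec ⟨(ρ i)⁻¹ * p i, hρT i⟩
        (fun j prev => ⟨(φ j prev.1 prev.2)⁻¹ * prev.1, hφT j prev.1 prev.2⟩) j
    refine ⟨fun j => (t j).1, rfl, fun j => (t j).2,
      fun j => ⟨φ j (t j).1 (t j).2, hφFs _ _ _, ?_⟩⟩
    have hstep : (t (j + 1)).1 = (φ j (t j).1 (t j).2)⁻¹ * (t j).1 := rfl
    show (t j).1 = φ j (t j).1 (t j).2 * (t (j + 1)).1
    rw [hstep, mul_inv_cancel_left]
  choose tch htch0 htchT htchstep using chain
  -- capture lemma: every element of T m is generated by points placed in members with index ≥ m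
  have capture : ∀ (m : ℕ) (τ : G), τ ∈ (T m : Set G) →
      ∃ E : Set (ℕ × G), E.Finite ∧
        (∀ ee ∈ E, m ≤ Prod.fst ee ∧ Prod.snd ee ∈ U (Prod.fst ee) ∧ Prod.snd ee ∈ (P : Set G)) ∧
        (∀ L' : Set G, (∀ ee ∈ E, Prod.snd ee ∈ L') → τ ∈ Subgroup.closure L') := by
    intro m τ hτ
    induction hτ using Subgroup.closure_induction with
    | mem g hg =>
      simp only [hS, Set.mem_iUnion] at hg
      obtain ⟨n, hmn, hgP, x₀, hx₀, hx₀g⟩ := hg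
      have hopen : IsOpen (U n ∩ (fun y => y * g) ⁻¹' (U n)) :=
        (hUopen n).inter ((hUopen n).preimage (continuous_mul_right g))
      have hne : (U n ∩ (fun y => y * g) ⁻¹' (U n)).Nonempty := ⟨x₀, hx₀, hx₀g⟩
      obtain ⟨x, hxP, hxU, hxgU⟩ := hPd.exists_mem_open hopen hne
      refine ⟨{(n, x), (n, x * g)}, (Set.finite_singleton _).insert _, ?_, ?_⟩
      · rintro ee (rfl | rfl)
        · exact ⟨hmn, hxU, hxP⟩
        · exact ⟨hmn, hxgU, P.mul_mem hxP hgP⟩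
      · intro L' hL'
        have h1 : x ∈ Subgroup.closure L' :=
          Subgroup.subset_closure (hL' (n, x) (Set.mem_insert _ _))
        have h2 : x * g ∈ Subgroup.closure L' :=
          Subgroup.subset_closure (hL' (n, x * g) (Set.mem_insert_of_mem _ rfl))
        have : g = x⁻¹ * (x * g) := by group
        rw [this]
        exact Subgroup.mul_mem _ (Subgroup.inv_mem _ h1) h2
    | one =>
      exact ⟨∅, Set.finite_empty, by simp, fun L' _ => Subgroup.one_mem _⟩
    | mul x y hx hy ihx ihy =>
      obtain ⟨E₁, hE₁f, hE₁p, hE₁g⟩ := ihx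
      obtain ⟨E₂, hE₂f, hE₂p, hE₂g⟩ := ihy
      refine ⟨E₁ ∪ E₂, hE₁f.union hE₂f, ?_, ?_⟩
      · rintro ee (h | h)
        · exact hE₁p ee h
        · exact hE₂p ee h
      · intro L' hL'
        exact Subgroup.mul_mem _
          (hE₁g L' fun ee h => hL' ee (Set.mem_union_left _ h))
          (hE₂g L' fun ee h => hL' ee (Set.mem_union_right _ h))
    | inv x hx ihx =>
      obtain ⟨E₁, hE₁f, hE₁p, hE₁g⟩ := ihx
      exact ⟨E₁, hE₁f, hE₁p, fun L' hL' => Subgroup.inv_mem _ (hE₁g L' hL')⟩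
  -- capture sets for the chain residuals
  choose ET hETfin hETprop hETgen using fun i => capture i (tch i i) (htchT i i)
  -- capture sets for the transversal elements
  have capFs : ∀ j : ℕ, ∃ E : Set (ℕ × G), E.Finite ∧
      (∀ ee ∈ E, j ≤ Prod.fst ee ∧ Prod.snd ee ∈ U (Prod.fst ee) ∧ Prod.snd ee ∈ (P : Set G)) ∧
      (∀ L' : Set G, (∀ ee ∈ E, Prod.snd ee ∈ L') → ∀ f ∈ Fs j, f ∈ Subgroup.closure L') := by
    intro j
    choose Ef hEf1 hEf2 hEf3 using fun f : {f : G // f ∈ Fs j} => capture j f.1 (hFsT j f.2)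
    have hfint : Finite {f : G // f ∈ Fs j} := (hFsfin j).to_subtype
    refine ⟨⋃ f, Ef f, Set.finite_iUnion hEf1, ?_, ?_⟩
    · intro ee h
      simp only [Set.mem_iUnion] at h
      obtain ⟨f, hf⟩ := h
      exact hEf2 f ee hf
    · intro L' hL' f hfFs
      exact hEf3 ⟨f, hfFs⟩ L' fun ee h => hL' ee (Set.mem_iUnion.mpr ⟨⟨f, hfFs⟩, h⟩)
  choose EF hEFfin hEFprop hEFgen using capFs
  -- capture points for R
  have hRcap : ∀ r : G, ∃ x : G, x ∈ (P : Set G) ∧ x ∈ U 0 ∧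
      (r ∈ R → r * x ∈ (P : Set G)) := by
    intro r
    obtain ⟨x, hxP, hxU⟩ := hPd.exists_mem_open (hUopen 0) ⟨a 0, ha 0⟩
    exact ⟨x, hxP, hxU, fun hr => P.mul_mem (hRP hr) hxP⟩
  choose ξ hξP hξU hξmul using hRcap
  -- THE SET L
  set AllE : Set (ℕ × G) := (⋃ i, ET i) ∪ (⋃ j, EF j) with hAllE
  set L : Set G := (Prod.snd '' AllE) ∪ (⋃ r ∈ R, {ξ r, r * ξ r}) with hLdef
  have hAllprop : ∀ ee ∈ AllE, Prod.snd ee ∈ U (Prod.fst ee) ∧ Prod.snd ee ∈ (P : Set G) := by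
    rintro ee (h | h)
    · simp only [Set.mem_iUnion] at h
      obtain ⟨i, hi⟩ := h
      exact ⟨(hETprop i ee hi).2.1, (hETprop i ee hi).2.2⟩
    · simp only [Set.mem_iUnion] at h
      obtain ⟨j, hj⟩ := h
      exact ⟨(hEFprop j ee hj).2.1, (hEFprop j ee hj).2.2⟩
  have hLP : L ⊆ (P : Set G) := by
    rintro x (⟨ee, hee, rfl⟩ | h)
    · exact (hAllprop ee hee).2
    · simp only [Set.mem_iUnion] at h
      obtain ⟨r, hr, hx⟩ := h
      rcases hx with rfl | hx
      · exact hξP r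
      · rw [Set.mem_singleton_iff] at hx
        rw [hx]
        exact hξmul r hr
  -- local finiteness of L
  have hLlf : ∀ z : G, ∃ V ∈ nhds z, (L ∩ V).Finite := by
    intro z
    obtain ⟨V, hV, hNfin⟩ := hUlf z
    refine ⟨V, hV, ?_⟩
    have hhostfin : ∀ n : ℕ, (Prod.snd '' (AllE ∩ Prod.fst ⁻¹' {n})).Finite := by
      intro n
      refine Set.Finite.image _ (Set.Finite.subset ?_ (s := ⋃ i ∈ Finset.range (n + 1), (ET i ∪ EF i)) ?_)
      · exact (Finset.range (n + 1)).finite_toSet.biUnion fun i _ => (hETfin i).union (hEFfin i)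
      · rintro ee ⟨hee, hn⟩
        simp only [Set.mem_preimage, Set.mem_singleton_iff] at hn
        simp only [Set.mem_iUnion, Finset.mem_coe, Finset.mem_range]
        rcases hee with h | h
        · simp only [Set.mem_iUnion] at h
          obtain ⟨i, hi⟩ := h
          have hle : i ≤ Prod.fst ee := (hETprop i ee hi).1
          exact ⟨i, by omega, Set.mem_union_left _ hi⟩
        · simp only [Set.mem_iUnion] at h
          obtain ⟨j, hj⟩ := h
          have hle : j ≤ Prod.fst ee := (hEFprop j ee hj).1
          exact ⟨j, by omega, Set.mem_union_right _ hj⟩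
    have hsub : L ∩ V ⊆ (⋃ r ∈ R, {ξ r, r * ξ r}) ∪
        ⋃ n ∈ {n : ℕ | (U n ∩ V).Nonempty}, Prod.snd '' (AllE ∩ Prod.fst ⁻¹' {n}) := by
      rintro x ⟨hxL, hxV⟩
      rcases hxL with ⟨ee, hee, rfl⟩ | h
      · refine Set.mem_union_right _ ?_
        have hmem : Prod.fst ee ∈ {n : ℕ | (U n ∩ V).Nonempty} :=
          ⟨Prod.snd ee, (hAllprop ee hee).1, hxV⟩
        exact Set.mem_biUnion hmem ⟨ee, ⟨hee, rfl⟩, rfl⟩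
      · exact Set.mem_union_left _ h
    refine Set.Finite.subset (Set.Finite.union ?_ ?_) hsub
    · exact hRfin.biUnion fun r _ => (Set.finite_singleton _).insert _
    · exact hNfin.biUnion fun n _ => hhostfin n
  -- generation
  have hALL_L : ∀ ee ∈ AllE, Prod.snd ee ∈ L := fun ee h => Set.mem_union_left _ ⟨ee, h, rfl⟩
  have hgenR : ∀ r ∈ R, r ∈ Subgroup.closure L := by
    intro r hr
    have h1 : ξ r ∈ L := Set.mem_union_right _ (Set.mem_biUnion hr (Set.mem_insert _ _))
    have h2 : r * ξ r ∈ L :=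
      Set.mem_union_right _ (Set.mem_biUnion hr (Set.mem_insert_of_mem _ rfl))
    have hre : r = (r * ξ r) * (ξ r)⁻¹ := by group
    rw [hre]
    exact Subgroup.mul_mem _ (Subgroup.subset_closure h2)
      (Subgroup.inv_mem _ (Subgroup.subset_closure h1))
  have hgenFs : ∀ j, ∀ f ∈ Fs j, f ∈ Subgroup.closure L := by
    intro j f hf
    refine hEFgen j L (fun ee h => hALL_L ee ?_) f hf
    exact Set.mem_union_right _ (Set.mem_iUnion.mpr ⟨j, h⟩)
  have hgenT : ∀ i, tch i i ∈ Subgroup.closure L := by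
    intro i
    refine hETgen i L fun ee h => hALL_L ee ?_
    exact Set.mem_union_left _ (Set.mem_iUnion.mpr ⟨i, h⟩)
  have hdesc : ∀ i, ∀ d : ℕ, tch i (i - d) ∈ Subgroup.closure L := by
    intro i d
    induction d with
    | zero => simpa using hgenT i
    | succ d ih =>
      rcases le_or_gt i d with h | h
      · have heq : i - (d + 1) = i - d := by omega
        rw [heq]
        exact ih
      · have hstep : i - d = (i - (d + 1)) + 1 := by omega
        obtain ⟨f, hf, heq⟩ := htchstep i (i - (d + 1))
        rw [heq, ← hstep]
        exact Subgroup.mul_mem _ (hgenFs _ f hf) ih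
  have hgenP : ∀ x ∈ (P : Set G), x ∈ Subgroup.closure L := by
    intro x hx
    rw [hp] at hx
    obtain ⟨i, rfl⟩ := hx
    have h0 : tch i 0 ∈ Subgroup.closure L := by
      have := hdesc i i
      simpa using this
    have hre : p i = ρ i * tch i 0 := by
      rw [htch0, mul_inv_cancel_left]
    rw [hre]
    exact Subgroup.mul_mem _ (hgenR _ (hρR i)) h0
  have hcleq : Subgroup.closure L = P :=
    le_antisymm ((Subgroup.closure_le P).mpr hLP) fun x hx => hgenP x hx
  obtain ⟨hclosed, hdisc⟩ := aux_closed_discrete hLlf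
  exact ⟨L, hLP, hdisc, hclosed, hcleq, by rw [hcleq]; exact hPd⟩
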